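/- Let C ⊆ F_2^n be a binary code invariant under the permutation σ with c p-cycles and f fixed points (p odd prime), and suppose C is self-dual. Then for every two vectors u, v in C_φ = φ(E_σ(C)^*) ⊆ P^c, one has Σ_{i=1}^c u_i(x)·v_i(x^{-1}) = 0 in F_2[x]/(x^p - 1). -/

import Mathlib

open Finset

/-- Hamming weight of a binary vector. -/
def wt {ι : Type*} [Fintype ι] (v : ι → ZMod 2) : ℕ :=
  (Finset.univ.filter fun i => v i ≠ 0).card

/-- Dual of a binary code under the standard dot product. -/
def dualCode {ι : Type*} [Fintype ι] (C : Submodule (ZMod 2) (ι → ZMod 2)) :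
    Submodule (ZMod 2) (ι → ZMod 2) where
  carrier := {x | ∀ c ∈ C, ∑ i, x i * c i = 0}
  add_mem' := by
    intro a b ha hb c hc
    have := ha c hc; have := hb c hc
    simp only [Pi.add_apply, add_mul, Finset.sum_add_distrib]
    simp [ha c hc, hb c hc]
  zero_mem' := by intro c hc; simp
  smul_mem' := by
    intro r a ha c hc
    simp only [Pi.smul_apply, smul_eq_mul, mul_assoc, ← Finset.mul_sum]
    simp [ha c hc]

/-- Fixed subcode F_σ(C). -/
def fixedCode {ι : Type*} (σ : Equiv.Perm ι) (C : Submodule (ZMod 2) (ι → ZMod 2)) :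
    Submodule (ZMod 2) (ι → ZMod 2) where
  carrier := {v | v ∈ C ∧ v ∘ σ = v}
  add_mem' := by
    rintro a b ⟨ha, ha'⟩ ⟨hb, hb'⟩
    refine ⟨C.add_mem ha hb, ?_⟩
    funext i
    simpa using congrFun (congrArg₂ (· + ·) ha' hb') i
  zero_mem' := ⟨C.zero_mem, rfl⟩
  smul_mem' := by
    rintro r a ⟨ha, ha'⟩
    exact ⟨C.smul_mem r ha, by funext i; simpa using congrArg (r • ·) (congrFun ha' i)⟩

/-- Subcode E_σ(C): codewords with even weight on each cycle (and zero on fixed points). -/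
def evenCode {ι : Type*} (p : ℕ) (σ : Equiv.Perm ι) (C : Submodule (ZMod 2) (ι → ZMod 2)) :
    Submodule (ZMod 2) (ι → ZMod 2) where
  carrier := {v | v ∈ C ∧ ∀ i, ∑ k ∈ Finset.range p, v ((σ ^ k) i) = 0}
  add_mem' := by
    rintro a b ⟨ha, ha'⟩ ⟨hb, hb'⟩
    refine ⟨C.add_mem ha hb, fun i => ?_⟩
    simp [Finset.sum_add_distrib, ha' i, hb' i]
  zero_mem' := ⟨C.zero_mem, by simp⟩
  smul_mem' := by
    rintro r a ⟨ha, ha'⟩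
    refine ⟨C.smul_mem r ha, fun i => ?_⟩
    simp only [Pi.smul_apply, smul_eq_mul]
    rw [← Finset.mul_sum, ha' i, mul_zero]

/-- Coordinate index set for an automorphism of type p-(c,f): `c` cycles of
length `p` followed by `f` fixed points. -/
abbrev Idx (p c f : ℕ) : Type := (Fin c × Fin p) ⊕ Fin f

/-- The standard permutation with `c` cycles of length `p` and `f` fixed points. -/
def stdPerm (p c f : ℕ) : Equiv.Perm (Idx p c f) :=
  Equiv.sumCongr (Equiv.prodCongr (Equiv.refl (Fin c)) (finRotate p)) (Equiv.refl (Fin f))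

/-- The projection π recording one bit per cycle and the fixed-point bits. -/
def proj (p c f : ℕ) [NeZero p] :
    (Idx p c f → ZMod 2) →ₗ[ZMod 2] ((Fin c ⊕ Fin f) → ZMod 2) where
  toFun v := Sum.elim (fun j => v (Sum.inl (j, 0))) (fun l => v (Sum.inr l))
  map_add' := by intro a b; funext i; cases i <;> simp
  map_smul' := by intro r a; funext i; cases i <;> simp

open Polynomial

/-- The ring F_2[x]/(x^p - 1). -/
abbrev Rp (p : ℕ) : Type :=
  Polynomial (ZMod 2) ⧸ Ideal.span {(Polynomial.X : Polynomial (ZMod 2)) ^ p - 1}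

/-- The quotient map F_2[x] → F_2[x]/(x^p - 1). -/
noncomputable def mkp (p : ℕ) : Polynomial (ZMod 2) →+* Rp p := Ideal.Quotient.mk _

/-- The ideal P of even-weight elements of F_2[x]/(x^p-1), generated by x - 1. -/
noncomputable def evenIdeal (p : ℕ) : Ideal (Rp p) :=
  Ideal.span {mkp p (Polynomial.X - 1)}

/-- Multiplication on (the subtype of) an ideal of a commutative ring. -/
noncomputable instance idealMul {R : Type*} [CommRing R] (I : Ideal R) : Mul I :=
  ⟨fun a b => ⟨a.1 * b.1, I.mul_mem_left a.1 b.2⟩⟩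
open Fin.NatCast
/-- If `C` is self-dual and invariant under the standard permutation of type p-(c,f),
then for any two codewords `u, w` of `E_σ(C)`, writing `u_j(x), w_j(x) ∈ P` for their
cycle blocks, one has `Σ_j u_j(x)·w_j(x⁻¹) = 0` in F_2[x]/(x^p - 1). -/
theorem statement12 {p c f : ℕ} [NeZero p] (hp : p.Prime) (hodd : Odd p)
    (C : Submodule (ZMod 2) (Idx p c f → ZMod 2))
    (hself : C = dualCode C)
    (haut : ∀ v, v ∈ C ↔ v ∘ (stdPerm p c f) ∈ C) :
    ∀ u ∈ evenCode p (stdPerm p c f) C, ∀ w ∈ evenCode p (stdPerm p c f) C,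
      ∑ j : Fin c,
        (∑ k : Fin p, u (Sum.inl (j, k)) • (mkp p X) ^ (k : ℕ)) *
        (∑ k : Fin p, w (Sum.inl (j, k)) • (mkp p X) ^ ((p - 1) * (k : ℕ))) = 0 := by
  intro u hu w hw
  obtain ⟨p', rfl⟩ : ∃ q, p = q + 1 := ⟨p - 1, (Nat.succ_pred_eq_of_pos hp.pos).symm⟩
  obtain ⟨huC, hue⟩ := hu
  obtain ⟨hwC, -⟩ := hw
  set σ : Equiv.Perm (Idx (p' + 1) c f) := stdPerm (p' + 1) c f with hσ
  set ξ : Rp (p' + 1) := mkp (p' + 1) X with hξ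
  have hξp : ξ ^ (p' + 1) = 1 := by
    have h0 : mkp (p' + 1) (X ^ (p' + 1) - 1) = 0 :=
      Ideal.Quotient.eq_zero_iff_mem.mpr (Ideal.subset_span rfl)
    rw [map_sub, map_pow, map_one, sub_eq_zero] at h0
    exact h0
  have hpow : ∀ a : ℕ, ξ ^ a = ξ ^ (a % (p' + 1)) := by
    intro a
    conv_lhs => rw [← Nat.div_add_mod a (p' + 1)]
    rw [pow_add, pow_mul, hξp, one_pow, one_mul]
  have hσr : ∀ (m : ℕ) (l : Fin f), (σ ^ m) (Sum.inr l) = Sum.inr l := by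
    intro m l
    induction m with
    | zero => rfl
    | succ n ih =>
      have hstep : σ (Sum.inr l) = Sum.inr l := rfl
      rw [pow_succ, Equiv.Perm.mul_apply, hstep, ih]
  have hσl : ∀ (m : ℕ) (j : Fin c) (k : Fin (p' + 1)),
      (σ ^ m) (Sum.inl (j, k)) = Sum.inl (j, k + (m : Fin (p' + 1))) := by
    intro m j
    induction m with
    | zero => intro k; simp
    | succ n ih =>
      intro k
      have hstep : σ (Sum.inl (j, k)) = Sum.inl (j, k + 1) := by
        simp [hσ, stdPerm, finRotate_succ_apply]
      rw [pow_succ, Equiv.Perm.mul_apply, hstep, ih (k + 1)]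
      congr 1
      rw [Nat.cast_add, Nat.cast_one]
      rw [add_assoc, add_comm (1 : Fin (p' + 1))]
  have hufix : ∀ l : Fin f, u (Sum.inr l) = 0 := by
    intro l
    have h := hue (Sum.inr l)
    have hconst : ∑ k ∈ Finset.range (p' + 1), u ((σ ^ k) (Sum.inr l))
        = ((p' + 1 : ℕ) : ZMod 2) * u (Sum.inr l) := by
      rw [Finset.sum_congr rfl fun k _ => by rw [hσr]]
      simp [Finset.sum_const, nsmul_eq_mul]
    rw [hconst] at h
    have hcast : ((p' + 1 : ℕ) : ZMod 2) = 1 := by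
      rw [← ZMod.natCast_mod, Nat.odd_iff.mp hodd, Nat.cast_one]
    rwa [hcast, one_mul] at h
  have hmem : ∀ v ∈ C, ∀ m : ℕ, (v ∘ ⇑(σ ^ m)) ∈ C := by
    intro v hv m
    induction m with
    | zero => simpa using hv
    | succ n ih =>
      have hcomp : v ∘ ⇑(σ ^ (n + 1))
          = (v ∘ ⇑(σ ^ n)) ∘ ⇑(stdPerm (p' + 1) c f) := by
        funext i
        simp [pow_succ, Equiv.Perm.mul_apply, Function.comp, hσ]
      rw [hcomp]
      exact (haut _).mp ih
  have hinner : ∀ m : ℕ,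
      (∑ j : Fin c, ∑ k : Fin (p' + 1),
        u (Sum.inl (j, k + (m : Fin (p' + 1)))) * w (Sum.inl (j, k))) = 0 := by
    intro m
    have hw' : w ∈ dualCode C := hself ▸ hwC
    have h := hw' (u ∘ ⇑(σ ^ m)) (hmem u huC m)
    rw [Fintype.sum_sum_type] at h
    have hfix : ∑ l : Fin f, w (Sum.inr l) * (u ∘ ⇑(σ ^ m)) (Sum.inr l) = 0 := by
      refine Finset.sum_eq_zero fun l _ => ?_
      simp [Function.comp, hσr, hufix l]
    rw [hfix, add_zero, Fintype.sum_prod_type] at h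
    rw [← h]
    refine Finset.sum_congr rfl fun j _ => Finset.sum_congr rfl fun k _ => ?_
    rw [Function.comp_apply, hσl m j k, mul_comm]
  have hps : p' + 1 - 1 = p' := rfl
  calc
    ∑ j : Fin c,
        (∑ k : Fin (p' + 1), u (Sum.inl (j, k)) • ξ ^ (k : ℕ)) *
        (∑ k : Fin (p' + 1), w (Sum.inl (j, k)) • ξ ^ ((p' + 1 - 1) * (k : ℕ)))
      = ∑ j : Fin c, ∑ k' : Fin (p' + 1), ∑ k : Fin (p' + 1),
          (u (Sum.inl (j, k)) * w (Sum.inl (j, k'))) • ξ ^ ((k : ℕ) + p' * (k' : ℕ)) := by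
        refine Finset.sum_congr rfl fun j _ => ?_
        rw [Finset.sum_mul_sum, Finset.sum_comm]
        refine Finset.sum_congr rfl fun k' _ => Finset.sum_congr rfl fun k _ => ?_
        simp only [hps, pow_add, smul_mul_assoc, mul_smul_comm, smul_smul]
        rw [mul_comm (w (Sum.inl (j, k'))) (u (Sum.inl (j, k)))]
    _ = ∑ j : Fin c, ∑ k' : Fin (p' + 1), ∑ m : Fin (p' + 1),
          (u (Sum.inl (j, k' + m)) * w (Sum.inl (j, k'))) • ξ ^ (m : ℕ) := by
        refine Finset.sum_congr rfl fun j _ => Finset.sum_congr rfl fun k' _ => ?_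
        rw [← Equiv.sum_comp (Equiv.addLeft k')
          (fun k => (u (Sum.inl (j, k)) * w (Sum.inl (j, k'))) • ξ ^ ((k : ℕ) + p' * (k' : ℕ)))]
        refine Finset.sum_congr rfl fun m _ => ?_
        have he : Equiv.addLeft k' m = k' + m := rfl
        rw [he]
        congr 1
        rw [hpow]
        have hv : ((k' + m : Fin (p' + 1)) : ℕ) = ((k' : ℕ) + (m : ℕ)) % (p' + 1) :=
          Fin.val_add _ _
        rw [hv, Nat.mod_add_mod,
          show (k' : ℕ) + (m : ℕ) + p' * (k' : ℕ) = (m : ℕ) + (k' : ℕ) * (p' + 1) from by ring,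
          Nat.add_mul_mod_self_right, Nat.mod_eq_of_lt m.isLt]
    _ = ∑ m : Fin (p' + 1),
          (∑ j : Fin c, ∑ k' : Fin (p' + 1),
            u (Sum.inl (j, k' + m)) * w (Sum.inl (j, k'))) • ξ ^ (m : ℕ) := by
        have h1 : ∀ j : Fin c,
            (∑ k' : Fin (p' + 1), ∑ m : Fin (p' + 1),
              (u (Sum.inl (j, k' + m)) * w (Sum.inl (j, k'))) • ξ ^ (m : ℕ))
          = ∑ m : Fin (p' + 1), ∑ k' : Fin (p' + 1),
              (u (Sum.inl (j, k' + m)) * w (Sum.inl (j, k'))) • ξ ^ (m : ℕ) :=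
          fun j => Finset.sum_comm
        rw [Finset.sum_congr rfl fun j _ => h1 j, Finset.sum_comm]
        refine Finset.sum_congr rfl fun m _ => ?_
        simp [Finset.sum_smul]
    _ = 0 := by
        refine Finset.sum_eq_zero fun m _ => ?_
        have h := hinner (m : ℕ)
        rw [show ((((m : Fin (p' + 1)) : ℕ) : Fin (p' + 1))) = m from Fin.cast_val_eq_self m] at h
        rw [h, zero_smul]
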